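/- arXiv:1411.0894 — 2 statements merged into one kernel-verified Lean document; each statement's English description precedes it below -/
import Mathlib

section
/- Conversely, if a density μ on ℝ^d satisfies the Strong Minimal Mass Assumption — there exist κ > 0 and δ₀ > 0 such that ∫_{B(x,δ)} μ(z) dz ≥ κ μ(x) δ^d for all x in the support of μ and all δ ≤ δ₀ — then μ is bounded above by 1/(κ δ₀^d), and moreover λ[Supp(μ) ∩ B(x,δ)] ≥ (κ μ(x)/‖μ‖_∞) δ^d for all x ∈ Supp(μ) and δ ≤ δ₀. -/
open MeasureTheory Metric Real

/-- If a probability density `μ` on `ℝ^d` satisfies the Strong Minimal Mass Assumption with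
constants `κ, δ₀`, then `μ ≤ 1/(κ δ₀^d)`, and the support of `μ` is regular:
`λ(Supp(μ) ∩ B(x,δ)) ≥ (κ μ(x)/‖μ‖_∞) δ^d` for `x ∈ Supp(μ)` and `δ ≤ δ₀`. -/
theorem strong_minimal_mass_implies_SDA {d : ℕ}
    (μ : EuclideanSpace ℝ (Fin d) → ℝ) (hμ0 : ∀ x, 0 ≤ μ x)
    (hμint : Integrable μ volume) (hprob : ∫ x, μ x = 1)
    (S : Set (EuclideanSpace ℝ (Fin d))) (hS : MeasurableSet S)
    (hsupp : ∀ x ∉ S, μ x = 0)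
    (κ δ₀ : ℝ) (hκ : 0 < κ) (hδ₀ : 0 < δ₀)
    (hmma : ∀ x ∈ S, ∀ δ : ℝ, 0 < δ → δ ≤ δ₀ →
      κ * μ x * δ ^ d ≤ ∫ z in closedBall x δ, μ z) :
    (∀ x ∈ S, μ x ≤ 1 / (κ * δ₀ ^ d)) ∧
    (∀ x ∈ S, ∀ δ : ℝ, 0 < δ → δ ≤ δ₀ →
      ENNReal.ofReal ((κ * μ x / (⨆ y, μ y)) * δ ^ d) ≤ volume (S ∩ closedBall x δ)) := by
  have hd0 : (0:ℝ) < δ₀ ^ d := pow_pos hδ₀ d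
  have hbound : ∀ x ∈ S, μ x ≤ 1 / (κ * δ₀ ^ d) := by
    intro x hx
    have h1 : κ * μ x * δ₀ ^ d ≤ ∫ z in closedBall x δ₀, μ z := hmma x hx δ₀ hδ₀ le_rfl
    have h2 : ∫ z in closedBall x δ₀, μ z ≤ ∫ z, μ z :=
      setIntegral_le_integral hμint (Filter.Eventually.of_forall hμ0)
    rw [hprob] at h2
    rw [le_div_iff₀ (mul_pos hκ hd0)]
    nlinarith [h1.trans h2]
  refine ⟨hbound, ?_⟩
  have hC : ∀ y, μ y ≤ max 0 (1/(κ*δ₀^d)) := by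
    intro y
    by_cases hy : y ∈ S
    · exact le_max_of_le_right (hbound y hy)
    · rw [hsupp y hy]; exact le_max_left _ _
  have hbdd : BddAbove (Set.range μ) := ⟨_, fun a ⟨y, hy⟩ => hy ▸ hC y⟩
  intro x hx δ hδ hδle
  set M := ⨆ y, μ y with hM
  have hMx : μ x ≤ M := le_ciSup hbdd x
  by_cases hμx : μ x = 0
  · simp [hμx]
  have hμxpos : 0 < μ x := lt_of_le_of_ne (hμ0 x) (Ne.symm hμx)
  have hMpos : 0 < M := lt_of_lt_of_le hμxpos hMx
  have hind : μ = S.indicator μ := by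
    funext y
    by_cases hy : y ∈ S
    · simp [Set.indicator_of_mem hy]
    · simp [Set.indicator_of_notMem hy, hsupp y hy]
  have heq : ∫ z in closedBall x δ, μ z = ∫ z in S ∩ closedBall x δ, μ z := by
    conv_lhs => rw [hind]
    rw [setIntegral_indicator hS, Set.inter_comm]
  have hvolfin : volume (S ∩ closedBall x δ) < ⊤ :=
    lt_of_le_of_lt (measure_mono Set.inter_subset_right) measure_closedBall_lt_top
  have hle : ∫ z in S ∩ closedBall x δ, μ z ≤ M * (volume (S ∩ closedBall x δ)).toReal := by
    calc ∫ z in S ∩ closedBall x δ, μ z ≤ ‖∫ z in S ∩ closedBall x δ, μ z‖ := le_abs_self _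
    _ ≤ M * (volume (S ∩ closedBall x δ)).toReal :=
      norm_setIntegral_le_of_norm_le_const hvolfin (fun z _ => by
        rw [Real.norm_eq_abs, abs_of_nonneg (hμ0 z)]; exact le_ciSup hbdd z)
  have hkey : κ * μ x * δ ^ d ≤ M * (volume (S ∩ closedBall x δ)).toReal := by
    have := hmma x hx δ hδ hδle
    rw [heq] at this
    exact this.trans hle
  have hfinal : κ * μ x / M * δ ^ d ≤ (volume (S ∩ closedBall x δ)).toReal := by
    rw [div_mul_eq_mul_div, div_le_iff₀ hMpos]
    nlinarith [hkey]
  calc ENNReal.ofReal (κ * μ x / M * δ ^ d)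
      ≤ ENNReal.ofReal ((volume (S ∩ closedBall x δ)).toReal) :=
        ENNReal.ofReal_le_ofReal hfinal
    _ = volume (S ∩ closedBall x δ) := ENNReal.ofReal_toReal hvolfin.ne
end

section
/- Let φ ∈ C¹(Ω) with Ω ⊆ ℝ^d open, and let μ = e^{−φ} be a probability density. Suppose there exists a > 0 such that ‖∇φ(x)‖ / φ(x)^a → 0 as μ(x) → 0. Then there exist constants κ > 0, ρ = 1/a, C > 0, δ₀ > 0 such that for all δ ≤ δ₀ and all x ∈ Ω with μ(x) ≥ e^{−C δ^{−ρ}}, one has ∫_{B(x,δ)} μ(z) dz ≥ κ μ(x) δ^d. -/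
set_option maxHeartbeats 1000000

open MeasureTheory Metric Real
open Set Filter Topology ENNReal

private lemma band_lemma {d : ℕ} (φ : EuclideanSpace ℝ (Fin d) → ℝ) (hφ : ContDiff ℝ 1 φ)
    (a M : ℝ) (ha : 0 ≤ a) (hM0 : 0 ≤ M)
    (hgrad : ∀ z, M ≤ φ z → ‖gradient φ z‖ ≤ (φ z) ^ a)
    (x y : EuclideanSpace ℝ (Fin d)) (L : ℝ) (hL : M + 1 ≤ L)
    (hx : φ x ≤ L - 1) (hdist : dist y x * L ^ a ≤ 1/2) : φ y ≤ L := by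
  by_contra hy
  push_neg at hy
  set g : ℝ → ℝ := fun t => φ (x + t • (y - x)) with hgdef
  have hgc : Continuous g := hφ.continuous.comp (by continuity)
  have hg0 : g 0 = φ x := by simp [hgdef]
  have hg1 : g 1 = φ y := by simp [hgdef]
  set K : Set ℝ := Icc (0:ℝ) 1 ∩ {t | L ≤ g t} with hKdef
  have hK1 : (1:ℝ) ∈ K := ⟨⟨zero_le_one, le_refl 1⟩, by simp only [mem_setOf_eq, hg1]; exact hy.le⟩
  have hKc : IsClosed K := isClosed_Icc.inter (isClosed_le continuous_const hgc)
  have hKbdd : BddBelow K := ⟨0, fun t ht => ht.1.1⟩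
  set t₀ : ℝ := sInf K with ht₀def
  have ht₀ : t₀ ∈ K := hKc.csInf_mem ⟨1, hK1⟩ hKbdd
  have hlbK : ∀ t ∈ K, t₀ ≤ t := fun t ht => csInf_le hKbdd ht
  set J : Set ℝ := Icc (0:ℝ) t₀ ∩ {t | g t ≤ L - 1} with hJdef
  have hJ0 : (0:ℝ) ∈ J := ⟨⟨le_refl 0, ht₀.1.1⟩, by simp only [mem_setOf_eq, hg0]; exact hx⟩
  have hJc : IsClosed J := isClosed_Icc.inter (isClosed_le hgc continuous_const)
  have hJbdd : BddAbove J := ⟨t₀, fun t ht => ht.1.2⟩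
  set s₀ : ℝ := sSup J with hs₀def
  have hs₀ : s₀ ∈ J := hJc.csSup_mem ⟨0, hJ0⟩ hJbdd
  have hubJ : ∀ t ∈ J, t ≤ s₀ := fun t ht => le_csSup hJbdd ht
  have hs₀0 : 0 ≤ s₀ := hs₀.1.1
  have hs₀t₀ : s₀ < t₀ := by
    rcases lt_or_eq_of_le hs₀.1.2 with h | h
    · exact h
    · exfalso; have h1 := hs₀.2; rw [h] at h1; have h2 := ht₀.2; simp only [mem_setOf_eq] at h1 h2
      linarith
  have ht₀1 : t₀ ≤ 1 := ht₀.1.2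
  have hupper : ∀ t, s₀ ≤ t → t < t₀ → g t ≤ L := by
    intro t h1 h2
    by_contra h
    push_neg at h
    exact absurd (hlbK t ⟨⟨hs₀0.trans h1, h2.le.trans ht₀1⟩, h.le⟩) (not_le.mpr h2)
  have hlower : ∀ t, s₀ < t → t ≤ t₀ → L - 1 ≤ g t := by
    intro t h1 h2
    by_contra h
    push_neg at h
    exact absurd (hubJ t ⟨⟨(hs₀0.trans h1.le), h2⟩, h.le⟩) (not_le.mpr h1)
  have hgs₀ : L - 1 ≤ g s₀ := by
    refine ge_of_tendsto ((hgc.tendsto s₀).mono_left (nhdsWithin_le_nhds : 𝓝[>] s₀ ≤ 𝓝 s₀)) ?_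
    exact eventually_of_mem (Ioo_mem_nhdsGT_of_mem ⟨le_refl s₀, hs₀t₀⟩)
      (fun t ht => hlower t ht.1 ht.2.le)
  have hgt₀ : g t₀ ≤ L := by
    refine le_of_tendsto ((hgc.tendsto t₀).mono_left (nhdsWithin_le_nhds : 𝓝[<] t₀ ≤ 𝓝 t₀)) ?_
    exact eventually_of_mem (Ioo_mem_nhdsLT_of_mem ⟨hs₀t₀, le_refl t₀⟩)
      (fun t ht => hupper t ht.1.le ht.2)
  have hband : ∀ t ∈ Icc s₀ t₀, L - 1 ≤ g t ∧ g t ≤ L := by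
    rintro t ⟨h1, h2⟩
    constructor
    · rcases eq_or_lt_of_le h1 with h | h
      · rw [← h]; exact hgs₀
      · exact hlower t h h2
    · rcases eq_or_lt_of_le h2 with h | h
      · rw [h]; exact hgt₀
      · exact hupper t h1 h
  set p : EuclideanSpace ℝ (Fin d) := x + s₀ • (y - x) with hpdef
  set q : EuclideanSpace ℝ (Fin d) := x + t₀ • (y - x) with hqdef
  have hseg : ∀ z ∈ segment ℝ p q, M ≤ φ z ∧ φ z ≤ L := by
    intro z hz
    rw [segment_eq_image] at hz
    obtain ⟨θ, hθ, rfl⟩ := hz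
    have heq : (1 - θ) • p + θ • q = x + ((1 - θ) * s₀ + θ * t₀) • (y - x) := by
      rw [hpdef, hqdef]; module
    have htmem : (1 - θ) * s₀ + θ * t₀ ∈ Icc s₀ t₀ := by
      constructor <;> nlinarith [hθ.1, hθ.2, hs₀t₀.le]
    show M ≤ φ ((1 - θ) • p + θ • q) ∧ φ ((1 - θ) • p + θ • q) ≤ L
    rw [heq]
    have hb := hband _ htmem
    have : g ((1 - θ) * s₀ + θ * t₀) = φ (x + ((1 - θ) * s₀ + θ * t₀) • (y - x)) := rfl
    refine ⟨by linarith [hb.1], by linarith [hb.2]⟩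
  have hLa0 : 0 ≤ L ^ a := Real.rpow_nonneg (by linarith) a
  have hmv : ‖φ q - φ p‖ ≤ L ^ a * ‖q - p‖ := by
    refine (convex_segment p q).norm_image_sub_le_of_norm_fderiv_le
      (fun z _ => (hφ.differentiable one_ne_zero).differentiableAt) ?_
      (left_mem_segment ℝ p q) (right_mem_segment ℝ p q)
    intro z hz
    obtain ⟨h1, h2⟩ := hseg z hz
    have hnorm : ‖fderiv ℝ φ z‖ = ‖gradient φ z‖ := by
      rw [gradient]; exact ((InnerProductSpace.toDual ℝ _).symm.norm_map _).symm
    rw [hnorm]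
    exact (hgrad z h1).trans (Real.rpow_le_rpow (hM0.trans h1) h2 ha)
  have hqp : q - p = (t₀ - s₀) • (y - x) := by rw [hpdef, hqdef]; module
  have hqpnorm : ‖q - p‖ ≤ ‖y - x‖ := by
    rw [hqp, norm_smul, Real.norm_eq_abs, abs_of_nonneg (by linarith)]
    nlinarith [norm_nonneg (y - x), hs₀t₀.le, ht₀1, hs₀0]
  have h1 : (1:ℝ) ≤ φ q - φ p := by
    have hq : L ≤ g t₀ := ht₀.2
    have hp : g s₀ ≤ L - 1 := hs₀.2
    have hφq : φ q = g t₀ := rfl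
    have hφp : φ p = g s₀ := rfl
    rw [hφq, hφp]; linarith
  have h2 : φ q - φ p ≤ ‖φ q - φ p‖ := le_abs_self _
  have h3 : ‖y - x‖ = dist y x := (dist_eq_norm y x).symm
  nlinarith [hmv, mul_le_mul_of_nonneg_left hqpnorm hLa0, norm_nonneg (q - p)]

private lemma phi_bddBelow {d : ℕ} (φ : EuclideanSpace ℝ (Fin d) → ℝ) (hφ : ContDiff ℝ 1 φ)
    (a M : ℝ) (ha : 0 ≤ a) (hM1 : 1 ≤ M)
    (hgrad : ∀ z, M ≤ φ z → ‖gradient φ z‖ ≤ (φ z) ^ a)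
    (hint : Integrable (fun z => Real.exp (-φ z))) :
    ∃ m : ℝ, ∀ x, m ≤ φ x := by
  by_contra hcon
  push_neg at hcon
  have hM0 : (0:ℝ) ≤ M := by linarith
  set P : ℝ := (M + 2) ^ a with hPdef
  have hP0 : 0 < P := Real.rpow_pos_of_pos (by linarith) a
  set r : ℝ := (2 * P)⁻¹ with hrdef
  have hr : 0 < r := by positivity
  -- containment of balls around low points
  have hball : ∀ z, φ z ≤ M + 1 → ∀ y ∈ closedBall z r, φ y ≤ M + 2 := by
    intro z hz y hy
    refine band_lemma φ hφ a M ha hM0 hgrad z y (M + 2) (by linarith) (by linarith) ?_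
    have hdy : dist y z ≤ r := mem_closedBall.mp hy
    calc dist y z * P ≤ r * P := mul_le_mul_of_nonneg_right hdy hP0.le
      _ = 1/2 := by rw [hrdef]; field_simp
  -- there are low points of arbitrarily large norm
  have key : ∀ R : ℝ, ∃ z : EuclideanSpace ℝ (Fin d), R < ‖z‖ ∧ φ z ≤ M + 1 := by
    intro R
    obtain ⟨w, hwmem, hwmin⟩ :=
      (isCompact_closedBall (0 : EuclideanSpace ℝ (Fin d)) (max R 0)).exists_isMinOn
        ⟨0, mem_closedBall_self (le_max_right R 0)⟩ hφ.continuous.continuousOn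
    obtain ⟨z, hz⟩ := hcon (min (φ w) (M + 1))
    refine ⟨z, ?_, (lt_min_iff.mp hz).2.le⟩
    by_contra h
    push_neg at h
    have hzmem : z ∈ closedBall (0 : EuclideanSpace ℝ (Fin d)) (max R 0) := by
      rw [mem_closedBall_zero_iff]; exact h.trans (le_max_left R 0)
    have h2 := hwmin hzmem
    simp only [mem_setOf_eq] at h2
    linarith [(lt_min_iff.mp hz).1]
  -- build a separated sequence of low points
  have key' : ∀ z : EuclideanSpace ℝ (Fin d), ∃ w : EuclideanSpace ℝ (Fin d),
      ‖z‖ + 2 * r + 1 < ‖w‖ ∧ φ w ≤ M + 1 := fun z => key (‖z‖ + 2 * r + 1)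
  choose F hF1 hF2 using key'
  obtain ⟨z₀, _, hz₀⟩ := key 0
  set g : ℕ → EuclideanSpace ℝ (Fin d) := fun k => F^[k] z₀ with hgdef
  have hgsucc : ∀ k, g (k + 1) = F (g k) := fun k => Function.iterate_succ_apply' F k z₀
  have hgφ : ∀ k, φ (g k) ≤ M + 1 := by
    intro k
    cases k with
    | zero => exact hz₀
    | succ n => rw [hgsucc n]; exact hF2 (g n)
  have hsep1 : ∀ k, ‖g k‖ + 2 * r + 1 < ‖g (k + 1)‖ := by
    intro k; rw [hgsucc k]; exact hF1 (g k)
  have hmono : ∀ j k : ℕ, j < k → ‖g j‖ + 2 * r + 1 ≤ ‖g k‖ := by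
    intro j k hjk
    induction k with
    | zero => omega
    | succ n ih =>
      rcases Nat.lt_succ_iff_lt_or_eq.mp hjk with h | h
      · exact (ih h).trans (by linarith [hsep1 n, hr])
      · subst h; exact (hsep1 j).le
  have hdisj : ∀ j k : ℕ, j ≠ k → Disjoint (closedBall (g j) r) (closedBall (g k) r) := by
    have main : ∀ j k : ℕ, j < k → Disjoint (closedBall (g j) r) (closedBall (g k) r) := by
      intro j k h
      apply closedBall_disjoint_closedBall
      have h1 : ‖g k‖ - ‖g j‖ ≤ ‖g k - g j‖ := norm_sub_norm_le _ _
      have h2 : dist (g j) (g k) = ‖g k - g j‖ := by rw [dist_comm, dist_eq_norm]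
      linarith [hmono j k h]
    intro j k h
    rcases h.lt_or_gt with h | h
    · exact main j k h
    · exact (main k j h).symm
  -- the set where φ ≤ M + 2 has finite volume
  set A : Set (EuclideanSpace ℝ (Fin d)) := {z | φ z ≤ M + 2} with hAdef
  have hAmeas : MeasurableSet A := (isClosed_le hφ.continuous continuous_const).measurableSet
  set c₀ : ℝ≥0∞ := ENNReal.ofReal (Real.exp (-(M + 2))) with hc₀def
  have hc₀0 : c₀ ≠ 0 := by
    simp only [hc₀def, ne_eq, ENNReal.ofReal_eq_zero, not_le]
    exact Real.exp_pos _
  set I : ℝ≥0∞ := ∫⁻ z, ENNReal.ofReal (Real.exp (-φ z)) with hIdef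
  have hI : I ≠ ∞ := hint.lintegral_lt_top.ne
  have hAI : c₀ * volume A ≤ I := by
    calc c₀ * volume A = ∫⁻ _ in A, c₀ := (setLIntegral_const A c₀).symm
      _ ≤ ∫⁻ z in A, ENNReal.ofReal (Real.exp (-φ z)) := by
          refine setLIntegral_mono' hAmeas fun z hz => ?_
          exact ENNReal.ofReal_le_ofReal (Real.exp_le_exp.mpr (by simp only [hAdef, mem_setOf_eq] at hz; linarith))
      _ ≤ I := setLIntegral_le_lintegral _ _
  have hvolA : volume A ≠ ∞ := by
    intro h
    rw [h, ENNReal.mul_top hc₀0] at hAI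
    exact (hI (top_le_iff.mp hAI))
  -- each ball has the same positive finite volume
  set v : ℝ≥0∞ := volume (closedBall (0 : EuclideanSpace ℝ (Fin d)) r) with hvdef
  have hv0 : v ≠ 0 := (measure_closedBall_pos volume (0 : EuclideanSpace ℝ (Fin d)) hr).ne'
  have hvtop : v ≠ ∞ := measure_closedBall_lt_top.ne
  have hKsum : ∀ K : ℕ, (K : ℝ≥0∞) * v ≤ volume A := by
    intro K
    have hdisj' : ((Finset.range K : Finset ℕ) : Set ℕ).PairwiseDisjoint
        (fun k => closedBall (g k) r) := fun i _ j _ hij => hdisj i j hij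
    calc (K : ℝ≥0∞) * v = ∑ k ∈ Finset.range K, volume (closedBall (g k) r) := by
          simp [Measure.addHaar_closedBall_center, ← hvdef, Finset.sum_const, nsmul_eq_mul]
      _ = volume (⋃ k ∈ Finset.range K, closedBall (g k) r) :=
          (measure_biUnion_finset hdisj' fun k _ => measurableSet_closedBall).symm
      _ ≤ volume A := by
          refine measure_mono ?_
          intro y hy
          simp only [mem_iUnion, exists_prop] at hy
          obtain ⟨k, _, hk⟩ := hy
          exact hball (g k) (hgφ k) y hk
  obtain ⟨K, hK⟩ := ENNReal.exists_nat_gt (ENNReal.div_lt_top hvolA hv0).ne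
  have := hKsum K
  rw [← ENNReal.le_div_iff_mul_le (Or.inl hv0) (Or.inl hvtop)] at this
  exact absurd this (not_le.mpr hK)

/-- If `μ = e^{−φ}` is a probability density with `φ ∈ C¹` and `‖∇φ(x)‖ / φ(x)^a → 0` as
`μ(x) → 0`, then `μ` satisfies the weak minimal mass condition: there are `κ, C, δ₀ > 0`
such that `∫_{B(x,δ)} μ ≥ κ μ(x) δ^d` whenever `δ ≤ δ₀` and `μ(x) ≥ e^{−C δ^{−1/a}}`. -/
theorem weak_minimal_mass_of_log_density {d : ℕ}
    (φ : EuclideanSpace ℝ (Fin d) → ℝ) (hφ : ContDiff ℝ 1 φ)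
    (hprob : ∫ x, Real.exp (-φ x) = 1)
    (a : ℝ) (ha : 0 < a)
    (hlim : ∀ ε > (0:ℝ), ∃ c > (0:ℝ), ∀ x, Real.exp (-φ x) ≤ c →
      ‖gradient φ x‖ ≤ ε * (φ x) ^ a) :
    ∃ κ > (0:ℝ), ∃ C > (0:ℝ), ∃ δ₀ > (0:ℝ), ∀ δ : ℝ, 0 < δ → δ ≤ δ₀ →
      ∀ x : EuclideanSpace ℝ (Fin d),
        Real.exp (-C * δ ^ (-(1 / a))) ≤ Real.exp (-φ x) →
        κ * Real.exp (-φ x) * δ ^ d ≤ ∫ z in closedBall x δ, Real.exp (-φ z) := by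
  obtain ⟨c, hc, hgrad0⟩ := hlim 1 one_pos
  set M : ℝ := max 1 (1 - Real.log c) with hMdef
  have hM1 : (1:ℝ) ≤ M := le_max_left _ _
  have hgrad : ∀ z, M ≤ φ z → ‖gradient φ z‖ ≤ (φ z) ^ a := by
    intro z hz
    have h1 : Real.exp (-φ z) ≤ c := by
      have h2 : (1 - Real.log c) ≤ M := le_max_right _ _
      have h3 : -φ z ≤ Real.log c - 1 := by linarith
      calc Real.exp (-φ z) ≤ Real.exp (Real.log c - 1) := Real.exp_le_exp.mpr h3
        _ = c / Real.exp 1 := by rw [Real.exp_sub, Real.exp_log hc]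
        _ ≤ c := div_le_self hc.le (Real.one_le_exp (by norm_num))
    simpa using hgrad0 z h1
  have hint : Integrable (fun z => Real.exp (-φ z)) := by
    by_contra h
    rw [integral_undef h] at hprob
    norm_num at hprob
  obtain ⟨m, hm⟩ := phi_bddBelow φ hφ a M ha.le hM1 hgrad hint
  -- choose constants
  set C : ℝ := (2:ℝ) ^ (-(1/a)) / 2 with hCdef
  have hC0 : 0 < C := by
    have := Real.rpow_pos_of_pos (two_pos (α := ℝ)) (-(1/a))
    positivity
  set P : ℝ := M + 2 with hPdef
  have hP0 : 0 < P := by simp only [hPdef]; linarith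
  set δ₀ : ℝ := min 1 ((C / P) ^ a) with hδ₀def
  have hδ₀0 : 0 < δ₀ := lt_min one_pos (Real.rpow_pos_of_pos (by positivity) a)
  set v : ℝ := (volume (ball (0 : EuclideanSpace ℝ (Fin d)) 1)).toReal with hvdef
  have hv0 : 0 < v := by
    refine ENNReal.toReal_pos (measure_ball_pos volume _ one_pos).ne' measure_ball_lt_top.ne
  set κ : ℝ := Real.exp (min (-2) (m - M - 2)) * v with hκdef
  have hκ0 : 0 < κ := by positivity
  refine ⟨κ, hκ0, C, hC0, δ₀, hδ₀0, ?_⟩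
  intro δ hδ hδδ₀ x hx
  -- convert the hypothesis
  set β : ℝ := δ ^ (-(1/a) : ℝ) with hβdef
  have hβ0 : 0 < β := Real.rpow_pos_of_pos hδ _
  have hφx : φ x ≤ C * β := by
    have := Real.exp_le_exp.mp hx
    linarith
  -- δ^{1/a} ≤ C / P
  have hδ1a : δ ^ ((1:ℝ)/a) ≤ C / P := by
    have h1 : δ ≤ (C / P) ^ a := hδδ₀.trans (min_le_right _ _)
    have h2 : δ ^ ((1:ℝ)/a) ≤ ((C / P) ^ a) ^ ((1:ℝ)/a) :=
      Real.rpow_le_rpow hδ.le h1 (by positivity)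
    calc δ ^ ((1:ℝ)/a) ≤ ((C / P) ^ a) ^ ((1:ℝ)/a) := h2
      _ = (C / P) ^ (a * (1/a)) := (Real.rpow_mul (by positivity) _ _).symm
      _ = C / P := by rw [mul_one_div_cancel ha.ne', Real.rpow_one]
  have hβinv : β = (δ ^ ((1:ℝ)/a))⁻¹ := by
    rw [hβdef, ← Real.rpow_neg hδ.le]
  have hPCβ : P ≤ C * β := by
    have hpow : 0 < δ ^ ((1:ℝ)/a) := Real.rpow_pos_of_pos hδ _
    have h3 : δ ^ ((1:ℝ)/a) * P ≤ C := (le_div_iff₀ hP0).mp hδ1a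
    rw [hβinv, ← div_eq_mul_inv, le_div_iff₀ hpow]
    calc P * δ ^ ((1:ℝ)/a) = δ ^ ((1:ℝ)/a) * P := mul_comm _ _
      _ ≤ C := h3
  -- the band bound on the ball
  set L : ℝ := max (φ x) M + 2 with hLdef
  have hM0 : (0:ℝ) ≤ M := by linarith
  have hLM : M + 2 ≤ L := by
    have := le_max_right (φ x) M; simp only [hLdef]; linarith
  have hL0 : (0:ℝ) ≤ L := by linarith
  have hCβ0 : (0:ℝ) ≤ C * β := by positivity
  have hL2C : L ≤ 2 * C * β := by
    have h1 : max (φ x) M ≤ C * β + M := max_le (by linarith) (by linarith)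
    have h2 : M + 2 ≤ C * β := by linarith [hPCβ, hPdef.le, hPdef.ge]
    simp only [hLdef]; linarith
  have h2C : 2 * C = (2:ℝ) ^ (-(1/a) : ℝ) := by rw [hCdef]; ring
  have hLa : δ * L ^ a ≤ 1/2 := by
    have hLle : L ≤ (2:ℝ) ^ (-(1/a) : ℝ) * β := by rw [← h2C]; linarith [hL2C]
    have h1 : L ^ a ≤ ((2:ℝ) ^ (-(1/a) : ℝ) * β) ^ a := Real.rpow_le_rpow hL0 hLle ha.le
    have h2 : ((2:ℝ) ^ (-(1/a) : ℝ) * β) ^ a = (1/2) * δ⁻¹ := by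
      rw [Real.mul_rpow (by positivity) hβ0.le, hβdef,
        ← Real.rpow_mul (by norm_num : (0:ℝ) ≤ 2), ← Real.rpow_mul hδ.le]
      have hexp1 : (-(1/a)) * a = -1 := by field_simp
      rw [hexp1, Real.rpow_neg_one, Real.rpow_neg_one]
      norm_num
    calc δ * L ^ a ≤ δ * ((1/2) * δ⁻¹) :=
          mul_le_mul_of_nonneg_left (h2 ▸ h1) hδ.le
      _ = 1/2 := by field_simp
  have hballφ : ∀ y ∈ closedBall x δ, φ y ≤ L := by
    intro y hy
    refine band_lemma φ hφ a M ha.le hM0 hgrad x y L (by linarith) ?_ ?_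
    · have := le_max_left (φ x) M; simp only [hLdef]; linarith
    · have hdy : dist y x ≤ δ := mem_closedBall.mp hy
      have hLa0 : (0:ℝ) ≤ L ^ a := Real.rpow_nonneg hL0 a
      calc dist y x * L ^ a ≤ δ * L ^ a := mul_le_mul_of_nonneg_right hdy hLa0
        _ ≤ 1/2 := hLa
  -- integral lower bound
  have hIop : Real.exp (-L) * (volume (closedBall x δ)).toReal
      ≤ ∫ z in closedBall x δ, Real.exp (-φ z) := by
    have := setIntegral_ge_of_const_le_real measurableSet_closedBall measure_closedBall_lt_top.ne
      (fun y hy => Real.exp_le_exp.mpr (neg_le_neg (hballφ y hy))) hint.integrableOn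
    exact this
  have hvol : (volume (closedBall x δ)).toReal = δ ^ d * v := by
    rw [Measure.addHaar_closedBall volume x hδ.le, ENNReal.toReal_mul,
      ENNReal.toReal_ofReal (by positivity)]
    congr 2
    rw [finrank_euclideanSpace_fin]
  have hexp : Real.exp (min (-2) (m - M - 2)) * Real.exp (-φ x) ≤ Real.exp (-L) := by
    rw [← Real.exp_add]
    apply Real.exp_le_exp.mpr
    rcases le_total (φ x) M with h | h
    · have hmax : max (φ x) M = M := max_eq_right h
      have h1 := hm x
      have h2 := min_le_right (-2:ℝ) (m - M - 2)
      simp only [hLdef, hmax]; linarith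
    · have hmax : max (φ x) M = φ x := max_eq_left h
      have h2 := min_le_left (-2:ℝ) (m - M - 2)
      simp only [hLdef, hmax]; linarith
  calc κ * Real.exp (-φ x) * δ ^ d
      = (Real.exp (min (-2) (m - M - 2)) * Real.exp (-φ x)) * (δ ^ d * v) := by
        rw [hκdef]; ring
    _ ≤ Real.exp (-L) * (δ ^ d * v) := by
        apply mul_le_mul_of_nonneg_right hexp (by positivity)
    _ = Real.exp (-L) * (volume (closedBall x δ)).toReal := by rw [hvol]
    _ ≤ ∫ z in closedBall x δ, Real.exp (-φ z) := hIop
end
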